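/- Let f, f̂ : [0,1] → ℝ and let h = exp(2πi f), ĝ = exp(2πi f̂) pointwise. If 0 < ε < 1/2 and |ĝ(x) - h(x)| ≤ ε at a point x, then d_w(f̂(x) mod 1, f(x) mod 1) ≤ (1/π) arcsin(ε/(1-ε)), where d_w(a,b) = min(|a-b|, 1-|a-b|) is the wrap-around distance on [0,1). -/

import Mathlib

open Real Complex

/-- Wrap-around distance on [0,1). -/
noncomputable def dw (a b : ℝ) : ℝ := min |a - b| (1 - |a - b|)

lemma abs_exp_sub_exp_mul_I (s t : ℝ) :
    ‖Complex.exp ((s : ℂ) * Complex.I) - Complex.exp ((t : ℂ) * Complex.I)‖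
      = 2 * |Real.sin ((s - t) / 2)| := by
  rw [Complex.norm_def, Complex.normSq_apply]
  simp only [Complex.sub_re, Complex.sub_im, Complex.exp_ofReal_mul_I_re,
    Complex.exp_ofReal_mul_I_im]
  have h1 := Real.cos_two_mul ((s - t) / 2)
  have h2 := Real.sin_sq_add_cos_sq ((s - t) / 2)
  have h3 : 2 * ((s - t) / 2) = s - t := by ring
  rw [h3] at h1
  have h4 := Real.cos_sub s t
  have h5 := Real.sin_sq_add_cos_sq s
  have h6 := Real.sin_sq_add_cos_sq t
  have key : (Real.cos s - Real.cos t) * (Real.cos s - Real.cos t) +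
      (Real.sin s - Real.sin t) * (Real.sin s - Real.sin t)
      = (2 * |Real.sin ((s - t) / 2)|) ^ 2 := by
    rw [mul_pow, _root_.sq_abs]
    nlinarith [h1, h2, h4, h5, h6]
  rw [key, Real.sqrt_sq (by positivity)]

theorem stmt12 (f fh : ℝ → ℝ) (ε : ℝ) (hε1 : 0 < ε) (hε2 : ε < 1/2) (x : ℝ)
    (h : ‖Complex.exp (2 * Real.pi * Complex.I * (fh x)) -
          Complex.exp (2 * Real.pi * Complex.I * (f x))‖ ≤ ε) :
    dw (Int.fract (fh x)) (Int.fract (f x)) ≤ (1 / Real.pi) * Real.arcsin (ε / (1 - ε)) := by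
  have hπ := Real.pi_pos
  set a := fh x with ha
  set b := f x with hb
  -- rewrite the hypothesis using the helper lemma
  have e1 : (2 * (Real.pi : ℂ) * Complex.I * (a : ℂ)) = ((2 * Real.pi * a : ℝ) : ℂ) * Complex.I := by
    push_cast; ring
  have e2 : (2 * (Real.pi : ℂ) * Complex.I * (b : ℂ)) = ((2 * Real.pi * b : ℝ) : ℂ) * Complex.I := by
    push_cast; ring
  rw [e1, e2, abs_exp_sub_exp_mul_I] at h
  have e3 : (2 * Real.pi * a - 2 * Real.pi * b) / 2 = Real.pi * (a - b) := by ring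
  rw [e3] at h
  -- relate to fractional parts
  set d : ℝ := Int.fract a - Int.fract b with hd
  have hfa : Int.fract a = a - ⌊a⌋ := (Int.self_sub_floor a).symm
  have hfb : Int.fract b = b - ⌊b⌋ := (Int.self_sub_floor b).symm
  have hsplit : Real.pi * (a - b) = Real.pi * d + (⌊a⌋ - ⌊b⌋ : ℤ) * Real.pi := by
    rw [hd, hfa, hfb]; push_cast; ring
  have hsin_eq : |Real.sin (Real.pi * (a - b))| = |Real.sin (Real.pi * d)| := by
    rw [hsplit, Real.sin_add_int_mul_pi, abs_mul]
    rcases Int.even_or_odd (⌊a⌋ - ⌊b⌋) with he | ho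
    · simp [he.neg_one_zpow]
    · simp [ho.neg_one_zpow]
  rw [hsin_eq] at h
  -- D = |d| ∈ [0,1)
  set D : ℝ := |d| with hD
  have hD0 : 0 ≤ D := abs_nonneg d
  have hD1 : D < 1 := by
    rw [hD, abs_lt]
    constructor
    · have := Int.fract_nonneg a
      have := Int.fract_lt_one b
      simp only [hd]; linarith
    · have := Int.fract_lt_one a
      have := Int.fract_nonneg b
      simp only [hd]; linarith
  have hsinD : |Real.sin (Real.pi * d)| = Real.sin (Real.pi * D) := by
    rcases abs_cases d with ⟨h1, _⟩ | ⟨h1, _⟩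
    · rw [hD, h1]
      exact abs_of_nonneg (Real.sin_nonneg_of_nonneg_of_le_pi (by positivity)
        (by nlinarith))
    · rw [hD, h1, show Real.pi * -d = -(Real.pi * d) by ring, Real.sin_neg]
      exact abs_of_nonpos (Real.sin_nonpos_of_nonpos_of_neg_pi_le (by nlinarith) (by nlinarith))
  rw [hsinD] at h
  -- m = min D (1-D)
  set m : ℝ := min D (1 - D) with hm
  have hm0 : 0 ≤ m := le_min hD0 (by linarith)
  have hmhalf : m ≤ 1 / 2 := by
    have := min_le_left D (1 - D)
    have := min_le_right D (1 - D)
    linarith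
  have hsinm : Real.sin (Real.pi * m) = Real.sin (Real.pi * D) := by
    rcases min_cases D (1 - D) with ⟨h1, _⟩ | ⟨h1, _⟩
    · rw [hm, h1]
    · rw [hm, h1, show Real.pi * (1 - D) = Real.pi - Real.pi * D by ring, Real.sin_pi_sub]
  -- bound: sin (π m) ≤ ε/(1-ε)
  have hεd : Real.sin (Real.pi * m) ≤ ε / (1 - ε) := by
    rw [hsinm]
    have h1 : Real.sin (Real.pi * D) ≤ ε / 2 := by linarith
    have h2 : ε / 2 ≤ ε / (1 - ε) := by
      rw [div_le_div_iff₀ (by norm_num) (by linarith)]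
      nlinarith
    linarith
  -- conclude
  have harc : Real.pi * m ≤ Real.arcsin (ε / (1 - ε)) := by
    have heq : Real.arcsin (Real.sin (Real.pi * m)) = Real.pi * m :=
      Real.arcsin_sin (by nlinarith) (by nlinarith)
    calc Real.pi * m = Real.arcsin (Real.sin (Real.pi * m)) := heq.symm
      _ ≤ Real.arcsin (ε / (1 - ε)) := Real.monotone_arcsin hεd
  have : m ≤ (1 / Real.pi) * Real.arcsin (ε / (1 - ε)) := by
    rw [div_mul_eq_mul_div, one_mul, le_div_iff₀ hπ]
    linarith [harc]
  simpa [dw, hm, hD, hd] using this
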